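/- Let (u_n) and (v_n) be sequences of harmonic functions on the open unit disc 𝔻 ⊂ ℝ² such that for each n: Z(u_n) = Z(v_n) and u_n(x)·v_n(x) > 0 for every x ∈ 𝔻 ∖ Z(u_n) (i.e. the ratio u_n/v_n is positive off the common zero set). Suppose u_n converges to u and v_n converges to v uniformly on compact subsets of 𝔻, where u and v are harmonic on 𝔻 and neither is identically zero. Then Z(u) = Z(v). -/

import Mathlib

open Metric Set Filter

noncomputable section

abbrev En (n : ℕ) : Type := EuclideanSpace ℝ (Fin n)

/-- The Laplacian of `u` at `x`, computed from the second iterated Fréchet derivative. -/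
def laplacianAt {n : ℕ} (u : En n → ℝ) (x : En n) : ℝ :=
  ∑ i : Fin n, iteratedFDeriv ℝ 2 u x ![EuclideanSpace.single i 1, EuclideanSpace.single i 1]

/-- `u` is harmonic on `Ω`: twice continuously differentiable with vanishing Laplacian. -/
def HarmonicOnSet {n : ℕ} (u : En n → ℝ) (Ω : Set (En n)) : Prop :=
  ContDiffOn ℝ 2 u Ω ∧ ∀ x ∈ Ω, laplacianAt u x = 0

/-- The zero set of `u` within `Ω`. -/
def zeroSet {n : ℕ} (u : En n → ℝ) (Ω : Set (En n)) : Set (En n) :=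
  {x ∈ Ω | u x = 0}

/-- The collection of nodal domains of `u` in `Ω`, i.e. the connected components of
`Ω \ Z(u)`. -/
def nodalComponents {n : ℕ} (u : En n → ℝ) (Ω : Set (En n)) : Set (Set (En n)) :=
  {C | ∃ x ∈ Ω \ zeroSet u Ω, C = connectedComponentIn (Ω \ zeroSet u Ω) x}


open Complex Topology

def phiCLM : (ℂ →L[ℝ] ℝ) →L[ℝ] ℂ :=
  Complex.ofRealCLM.comp (ContinuousLinearMap.apply ℝ ℝ (1 : ℂ)) -
    (ContinuousLinearMap.apply ℝ ℝ Complex.I).smulRight Complex.I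

lemma phiCLM_apply (L : ℂ →L[ℝ] ℝ) : phiCLM L = (L 1 : ℂ) - (L I : ℂ) * I := by
  simp [phiCLM, Complex.real_smul]

lemma complex_decomp (w : ℂ) : w = w.re • (1:ℂ) + w.im • I := by
  simp [Complex.real_smul, Complex.re_add_im]

lemma clm_decomp' {M : Type*} [AddCommGroup M] [Module ℝ M] [TopologicalSpace M]
    (L : ℂ →L[ℝ] M) (w : ℂ) : L w = w.re • L 1 + w.im • L I := by
  have h := congrArg L (complex_decomp w)
  rw [map_add, map_smul, map_smul] at h
  exact h

lemma clm_decomp (L : ℂ →L[ℝ] ℝ) (w : ℂ) : L w = w.re * L 1 + w.im * L I :=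
  clm_decomp' L w

lemma phi_mul_re (L : ℂ →L[ℝ] ℝ) (w : ℂ) : (phiCLM L * w).re = L w := by
  rw [phiCLM_apply]
  conv_rhs => rw [clm_decomp L w]
  simp only [Complex.sub_re, Complex.sub_im, Complex.mul_re, Complex.mul_im, Complex.ofReal_re,
    Complex.ofReal_im, Complex.I_re, Complex.I_im]
  ring

lemma holo (W : ℂ → ℝ) (hW : ContDiffOn ℝ 2 W (ball 0 1))
    (hlap : ∀ z ∈ ball (0:ℂ) 1,
      fderiv ℝ (fderiv ℝ W) z 1 1 + fderiv ℝ (fderiv ℝ W) z I I = 0) :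
    DifferentiableOn ℂ (fun z => phiCLM (fderiv ℝ W z)) (ball 0 1) := by
  intro z hz
  have hball : ball (0:ℂ) 1 ∈ 𝓝 z := isOpen_ball.mem_nhds hz
  have hWz : ContDiffAt ℝ 2 W z := hW.contDiffAt hball
  have hD1 : ContDiffAt ℝ 1 (fderiv ℝ W) z := hWz.fderiv_right (by norm_num)
  have hD2 : HasFDerivAt (fderiv ℝ W) (fderiv ℝ (fderiv ℝ W) z) z :=
    (hD1.differentiableAt one_ne_zero).hasFDerivAt
  set D2 := fderiv ℝ (fderiv ℝ W) z with hD2def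
  have heventually : ∀ᶠ y in 𝓝 z, HasFDerivAt W (fderiv ℝ W y) y := by
    filter_upwards [hball] with y hy
    exact ((hW.contDiffAt (isOpen_ball.mem_nhds hy)).differentiableAt two_ne_zero).hasFDerivAt
  have hsymm : ∀ v w, D2 v w = D2 w v := fun v w =>
    second_derivative_symmetric_of_eventually heventually hD2 v w
  set c : ℂ := phiCLM (D2 1) with hc
  have hf : HasFDerivAt (fun z => phiCLM (fderiv ℝ W z)) (phiCLM.comp D2) z :=
    (phiCLM.hasFDerivAt).comp z hD2
  have hCR : phiCLM (D2 I) = I * c := by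
    have hl : D2 1 1 + D2 I I = 0 := hlap z hz
    have hII : D2 I I = -(D2 1 1) := by linarith
    rw [hc, phiCLM_apply, phiCLM_apply, hsymm I 1, hII]
    push_cast
    ring_nf
    rw [Complex.I_sq]
    ring
  have hres : (ContinuousLinearMap.restrictScalars ℝ
      (c • (1 : ℂ →L[ℂ] ℂ))) = phiCLM.comp D2 := by
    apply ContinuousLinearMap.ext
    intro w
    have : phiCLM (D2 w) = w.re • c + w.im • (I * c) := by
      rw [clm_decomp' D2 w, map_add, map_smul, map_smul, hCR, hc]
    simp only [ContinuousLinearMap.coe_restrictScalars', ContinuousLinearMap.smul_apply,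
      ContinuousLinearMap.one_apply, ContinuousLinearMap.coe_comp', Function.comp_apply, this,
      smul_eq_mul, Complex.real_smul]
    conv_lhs => rw [← Complex.re_add_im w]
    ring
  exact ⟨_, (hasFDerivAt_of_restrictScalars ℝ hf hres).differentiableAt.differentiableWithinAt.hasFDerivWithinAt⟩


lemma key (W : ℂ → ℝ) (hW : ContDiffOn ℝ 2 W (ball 0 1))
    (hlap : ∀ z ∈ ball (0:ℂ) 1,
      fderiv ℝ (fderiv ℝ W) z 1 1 + fderiv ℝ (fderiv ℝ W) z I I = 0)
    (z₀ : ℂ) (r : ℝ) (hr : 0 < r) (hballr : ball z₀ r ⊆ ball 0 1)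
    (hnn : ∀ z ∈ ball z₀ r, 0 ≤ W z) (hzero : W z₀ = 0) :
    ∀ z ∈ ball (0:ℂ) 1, W z = 0 := by
  set f : ℂ → ℂ := fun z => phiCLM (fderiv ℝ W z) with hfdef
  have hz₀ : z₀ ∈ ball (0:ℂ) 1 := hballr (mem_ball_self hr)
  have hf : DifferentiableOn ℂ f (ball 0 1) := holo W hW hlap
  have hanaly : AnalyticOnNhd ℂ f (ball 0 1) := hf.analyticOnNhd isOpen_ball
  have hdiffW : ∀ y ∈ ball (0:ℂ) 1, HasFDerivAt W (fderiv ℝ W y) y := fun y hy =>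
    ((hW.contDiffAt (isOpen_ball.mem_nhds hy)).differentiableAt two_ne_zero).hasFDerivAt
  -- FTC along segments
  have ftc : ∀ w : ℂ, ‖w‖ < r → W (z₀ + w) = ∫ t in (0:ℝ)..1, (f (z₀ + t • w) * w).re := by
    intro w hw
    have hmem : ∀ t : ℝ, t ∈ Set.Icc (0:ℝ) 1 → z₀ + t • w ∈ ball z₀ r := by
      intro t ht
      rw [mem_ball, dist_eq_norm]
      have : ‖z₀ + t • w - z₀‖ = |t| * ‖w‖ := by
        rw [add_sub_cancel_left, norm_smul, Real.norm_eq_abs]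
      rw [this]
      calc |t| * ‖w‖ ≤ 1 * ‖w‖ := by
            apply mul_le_mul_of_nonneg_right _ (norm_nonneg w)
            rw [_root_.abs_of_nonneg ht.1]; exact ht.2
        _ = ‖w‖ := one_mul _
        _ < r := hw
    have hderiv : ∀ t ∈ Set.uIcc (0:ℝ) 1,
        HasDerivAt (fun t : ℝ => W (z₀ + t • w)) ((f (z₀ + t • w) * w).re) t := by
      intro t ht
      rw [Set.uIcc_of_le zero_le_one] at ht
      have h1 : HasFDerivAt W (fderiv ℝ W (z₀ + t • w)) (z₀ + t • w) :=
        hdiffW _ (hballr (hmem t ht))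
      have h2 : HasDerivAt (fun t : ℝ => z₀ + t • w) w t := by
        simpa using ((hasDerivAt_id t).smul_const w).const_add z₀
      have h3 := h1.comp_hasDerivAt t h2
      simp only [hfdef]
      rw [phi_mul_re]
      exact h3
    have hcont : ContinuousOn (fun t : ℝ => (f (z₀ + t • w) * w).re)
        (Set.uIcc (0:ℝ) 1) := by
      rw [Set.uIcc_of_le zero_le_one]
      apply Complex.continuous_re.comp_continuousOn
      apply ContinuousOn.mul _ continuousOn_const
      apply hf.continuousOn.comp
      · exact (continuous_const.add (continuous_id.smul continuous_const)).continuousOn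
      · intro t ht
        exact hballr (hmem t ht)
    have hint := intervalIntegral.integral_eq_sub_of_hasDerivAt hderiv
      hcont.intervalIntegrable
    simp only [one_smul, zero_smul, add_zero, hzero, sub_zero] at hint
    exact hint.symm
  -- f vanishes near z₀
  have hfz : ∀ᶠ z in 𝓝 z₀, f z = 0 := by
    by_contra hne
    obtain ⟨n, g, hg_an, hg_ne, hg_eq⟩ :=
      ((hanaly z₀ hz₀).exists_eventuallyEq_pow_smul_nonzero_iff).mpr hne
    set a : ℝ := ‖g z₀‖ with ha_def
    have ha : 0 < a := norm_pos_iff.mpr hg_ne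
    obtain ⟨ω, hω⟩ := IsAlgClosed.exists_pow_nat_eq (k := ℂ)
      (-(starRingEnd ℂ (g z₀)) / (a : ℂ)) (Nat.succ_pos n)
    have hconj : (starRingEnd ℂ) (g z₀) * g z₀ = ((a^2 : ℝ) : ℂ) := by
      rw [mul_comm, Complex.mul_conj, Complex.normSq_eq_norm_sq]
    have hωg : ω ^ (n+1) * g z₀ = -(a:ℂ) := by
      rw [hω, div_mul_eq_mul_div, neg_mul, hconj]
      rw [neg_div, neg_inj, eq_comm]
      rw [eq_div_iff (by exact_mod_cast ne_of_gt ha)]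
      push_cast
      ring
    have hω1 : ‖ω‖ = 1 := by
      have h1 : ‖ω‖ ^ (n+1) = 1 := by
        rw [← norm_pow, hω]
        rw [norm_div, norm_neg, RCLike.norm_conj]
        have : ‖((a:ℝ) : ℂ)‖ = a := by
          rw [Complex.norm_real, Real.norm_eq_abs, _root_.abs_of_pos ha]
        rw [this, ha_def, div_self (ne_of_gt ha)]
      by_contra h
      rcases lt_or_gt_of_ne h with hlt | hgt
      · have h2 := pow_lt_one₀ (norm_nonneg ω) hlt (n := n+1) (by omega)
        linarith
      · have h2 := one_lt_pow₀ hgt (n := n+1) (by omega)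
        linarith
    have hcont : Tendsto (fun z => (ω^(n+1) * g z).re) (𝓝 z₀) (𝓝 (-a)) := by
      have h1 : ContinuousAt (fun z => (ω^(n+1) * g z).re) z₀ :=
        (Complex.continuous_re.continuousAt).comp (continuousAt_const.mul hg_an.continuousAt)
      have h2 : (ω^(n+1) * g z₀).re = -a := by rw [hωg]; simp
      rw [← h2]; exact h1
    have hev2 : ∀ᶠ z in 𝓝 z₀, (ω^(n+1) * g z).re < -a/2 :=
      hcont.eventually_lt_const (by linarith)
    obtain ⟨δ, hδpos, hδ⟩ := Metric.eventually_nhds_iff.mp (hg_eq.and hev2)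
    set s : ℝ := min (δ/2) (r/2) with hs_def
    have hs0 : 0 < s := lt_min (by linarith) (by linarith)
    have hsδ : s < δ := lt_of_le_of_lt (min_le_left _ _) (by linarith)
    have hsr : s < r := lt_of_le_of_lt (min_le_right _ _) (by linarith)
    have hnsω : ‖s • ω‖ = s := by
      rw [norm_smul, hω1, Real.norm_eq_abs, _root_.abs_of_pos hs0, mul_one]
    have hWs := ftc (s • ω) (by rw [hnsω]; exact hsr)
    -- pointwise bound
    have hpt : ∀ t ∈ Set.Icc (0:ℝ) 1,
        (f (z₀ + t • (s • ω)) * (s • ω)).re ≤ t^n * (s^(n+1) * (-a/2)) := by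
      intro t ht
      have hd : dist (z₀ + t • (s • ω)) z₀ < δ := by
        rw [dist_eq_norm, add_sub_cancel_left, norm_smul, hnsω, Real.norm_eq_abs,
          _root_.abs_of_nonneg ht.1]
        calc t * s ≤ 1 * s := mul_le_mul_of_nonneg_right ht.2 (le_of_lt hs0)
          _ = s := one_mul s
          _ < δ := hsδ
      obtain ⟨heq, hre⟩ := hδ hd
      rw [heq, smul_eq_mul]
      have hz : (z₀ + t • (s • ω)) - z₀ = ((t * s : ℝ) : ℂ) * ω := by
        rw [add_sub_cancel_left, smul_smul, Complex.real_smul]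
      rw [hz]
      have hid : ((((t*s:ℝ):ℂ) * ω)^n * g (z₀ + t • (s • ω))) * (s • ω)
          = ((t^n * s^(n+1) : ℝ) : ℂ) * (ω^(n+1) * g (z₀ + t • (s • ω))) := by
        simp only [Complex.real_smul]; push_cast; ring
      rw [hid, Complex.re_ofReal_mul]
      have hfac : (0:ℝ) ≤ t^n * s^(n+1) := by
        apply mul_nonneg (pow_nonneg ht.1 n) (pow_nonneg (le_of_lt hs0) _)
      calc t^n * s^(n+1) * (ω^(n+1) * g (z₀ + t • (s • ω))).re
          ≤ t^n * s^(n+1) * (-a/2) := mul_le_mul_of_nonneg_left (le_of_lt hre) hfac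
        _ = t^n * (s^(n+1) * (-a/2)) := by ring
    -- integrability
    have hint1 : IntervalIntegrable (fun t : ℝ => (f (z₀ + t • (s • ω)) * (s • ω)).re)
        MeasureTheory.volume 0 1 := by
      apply ContinuousOn.intervalIntegrable
      rw [Set.uIcc_of_le zero_le_one]
      apply Complex.continuous_re.comp_continuousOn
      apply ContinuousOn.mul _ continuousOn_const
      apply hf.continuousOn.comp
      · exact (continuous_const.add (continuous_id.smul continuous_const)).continuousOn
      · intro t ht
        apply hballr
        rw [mem_ball, dist_eq_norm, add_sub_cancel_left, norm_smul, hnsω, Real.norm_eq_abs,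
          _root_.abs_of_nonneg ht.1]
        calc t * s ≤ 1 * s := mul_le_mul_of_nonneg_right ht.2 (le_of_lt hs0)
          _ = s := one_mul s
          _ < r := hsr
    have hint2 : IntervalIntegrable (fun t : ℝ => t^n * (s^(n+1) * (-a/2)))
        MeasureTheory.volume 0 1 := by
      exact ((continuous_pow n).mul continuous_const).intervalIntegrable _ _
    have hmono := intervalIntegral.integral_mono_on zero_le_one hint1 hint2 hpt
    have hval : (∫ t in (0:ℝ)..1, t^n * (s^(n+1) * (-a/2)))
        = (s^(n+1) * (-a/2)) / (n+1) := by
      rw [intervalIntegral.integral_mul_const, integral_pow]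
      rw [one_pow, zero_pow (Nat.succ_ne_zero n)]
      ring
    have hmem : z₀ + s • ω ∈ ball z₀ r := by
      rw [mem_ball, dist_eq_norm, add_sub_cancel_left, hnsω]; exact hsr
    have hge := hnn _ hmem
    rw [hWs] at hge
    rw [hval] at hmono
    have hposq : (0:ℝ) < s^(n+1) * (a/2) / (n+1) := by positivity
    have : (s^(n+1) * (-a/2)) / (n+1) = -(s^(n+1) * (a/2) / (n+1)) := by ring
    rw [this] at hmono
    linarith
  -- identity theorem
  have hf0 : EqOn f 0 (ball (0:ℂ) 1) :=
    hanaly.eqOn_zero_of_preconnected_of_eventuallyEq_zero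
      (convex_ball (0:ℂ) 1).isPreconnected hz₀ hfz
  have hfderiv0 : ∀ y ∈ ball (0:ℂ) 1, fderiv ℝ W y = 0 := by
    intro y hy
    have h0 : phiCLM (fderiv ℝ W y) = 0 := hf0 hy
    rw [phiCLM_apply] at h0
    have h1 : fderiv ℝ W y 1 = 0 := by
      have := congrArg Complex.re h0; simpa using this
    have h2 : fderiv ℝ W y I = 0 := by
      have := congrArg Complex.im h0; simpa using this
    apply ContinuousLinearMap.ext; intro w
    rw [clm_decomp, h1, h2]; simp
  intro z hz
  have hconst := (convex_ball (0:ℂ) 1).is_const_of_fderivWithin_eq_zero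
    (hW.differentiableOn two_ne_zero)
    (fun x hx => by rw [fderivWithin_of_isOpen isOpen_ball hx]; exact hfderiv0 x hx) hz hz₀
  rw [hconst, hzero]


def eIso : ℂ ≃ₗᵢ[ℝ] En 2 :=
  Complex.isometryOfOrthonormal (EuclideanSpace.basisFun (Fin 2) ℝ)

lemma eIso_one : eIso 1 = EuclideanSpace.single (0 : Fin 2) 1 := by
  rw [eIso, Complex.isometryOfOrthonormal_apply]
  simp [EuclideanSpace.basisFun_apply]

lemma eIso_I : eIso I = EuclideanSpace.single (1 : Fin 2) 1 := by
  rw [eIso, Complex.isometryOfOrthonormal_apply]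
  simp [EuclideanSpace.basisFun_apply]

lemma eIso_mem_ball {z : ℂ} : eIso z ∈ ball (0 : En 2) 1 ↔ z ∈ ball (0 : ℂ) 1 := by
  rw [mem_ball_zero_iff, mem_ball_zero_iff, eIso.norm_map]

lemma eIso_mapsTo : MapsTo eIso (ball (0:ℂ) 1) (ball (0 : En 2) 1) := fun z hz =>
  eIso_mem_ball.mpr hz

def Ecl : ℂ →L[ℝ] En 2 := (eIso.toContinuousLinearEquiv : ℂ →L[ℝ] En 2)

lemma Ecl_apply (z : ℂ) : Ecl z = eIso z := rfl

lemma harmonic_transfer (U : En 2 → ℝ) (hU : HarmonicOnSet U (ball 0 1)) :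
    ContDiffOn ℝ 2 (U ∘ eIso) (ball 0 1) ∧ ∀ z ∈ ball (0:ℂ) 1,
      fderiv ℝ (fderiv ℝ (U ∘ eIso)) z 1 1 + fderiv ℝ (fderiv ℝ (U ∘ eIso)) z I I = 0 := by
  have hcd : ContDiffOn ℝ 2 (U ∘ eIso) (ball 0 1) := by
    apply hU.1.comp _ eIso_mapsTo
    exact (Ecl.contDiff : ContDiff ℝ 2 eIso).contDiffOn
  refine ⟨hcd, ?_⟩
  intro z hz
  have hez : eIso z ∈ ball (0 : En 2) 1 := eIso_mem_ball.mpr hz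
  -- first derivative of W = U ∘ eIso
  have hWd : ∀ y ∈ ball (0:ℂ) 1, fderiv ℝ (U ∘ eIso) y = (fderiv ℝ U (eIso y)).comp Ecl := by
    intro y hy
    have hUd : HasFDerivAt U (fderiv ℝ U (eIso y)) (eIso y) :=
      ((hU.1.contDiffAt (isOpen_ball.mem_nhds (eIso_mem_ball.mpr hy))).differentiableAt
        two_ne_zero).hasFDerivAt
    exact (hUd.comp y (Ecl.hasFDerivAt)).fderiv
  set T : (En 2 →L[ℝ] ℝ) →L[ℝ] (ℂ →L[ℝ] ℝ) :=
    (ContinuousLinearMap.compL ℝ ℂ (En 2) ℝ).flip Ecl with hT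
  have hD2U : HasFDerivAt (fderiv ℝ U) (fderiv ℝ (fderiv ℝ U) (eIso z)) (eIso z) := by
    have := (hU.1.contDiffAt (isOpen_ball.mem_nhds hez)).fderiv_right (m := 1) (by norm_num)
    exact (this.differentiableAt one_ne_zero).hasFDerivAt
  have hcomp : HasFDerivAt (fun y => fderiv ℝ U (eIso y))
      ((fderiv ℝ (fderiv ℝ U) (eIso z)).comp Ecl) z := hD2U.comp z Ecl.hasFDerivAt
  have hA : HasFDerivAt (fun y => T (fderiv ℝ U (eIso y)))
      (T.comp ((fderiv ℝ (fderiv ℝ U) (eIso z)).comp Ecl)) z := (T.hasFDerivAt).comp z hcomp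
  have hEE : fderiv ℝ (U ∘ eIso) =ᶠ[𝓝 z] fun y => T (fderiv ℝ U (eIso y)) := by
    filter_upwards [isOpen_ball.mem_nhds hz] with y hy
    rw [hWd y hy]
    rfl
  have hD2W : fderiv ℝ (fderiv ℝ (U ∘ eIso)) z
      = T.comp ((fderiv ℝ (fderiv ℝ U) (eIso z)).comp Ecl) := by
    rw [hEE.fderiv_eq]
    exact hA.fderiv
  have happ : ∀ v w : ℂ, fderiv ℝ (fderiv ℝ (U ∘ eIso)) z v w
      = fderiv ℝ (fderiv ℝ U) (eIso z) (eIso v) (eIso w) := by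
    intro v w
    rw [hD2W]
    rfl
  have hlapU := hU.2 (eIso z) hez
  rw [laplacianAt, Fin.sum_univ_two, iteratedFDeriv_two_apply, iteratedFDeriv_two_apply] at hlapU
  simp only [Matrix.cons_val_zero, Matrix.cons_val_one, Matrix.head_cons] at hlapU
  rw [happ, happ, eIso_one, eIso_I]
  exact hlapU


lemma neg_lap (W : ℂ → ℝ)
    (hlap : ∀ z ∈ ball (0:ℂ) 1,
      fderiv ℝ (fderiv ℝ W) z 1 1 + fderiv ℝ (fderiv ℝ W) z I I = 0) :
    ∀ z ∈ ball (0:ℂ) 1,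
      fderiv ℝ (fderiv ℝ (fun y => -W y)) z 1 1
        + fderiv ℝ (fderiv ℝ (fun y => -W y)) z I I = 0 := by
  intro z hz
  have h1 : (fderiv ℝ fun y => -W y) = fun y => -(fderiv ℝ W y) :=
    funext fun y => fderiv_neg
  have h2 : fderiv ℝ (fderiv ℝ fun y => -W y) z = -(fderiv ℝ (fderiv ℝ W) z) := by
    rw [h1]
    exact fderiv_neg
  rw [h2]
  simp only [ContinuousLinearMap.neg_apply]
  have := hlap z hz
  linarith



lemma main_aux (U V : En 2 → ℝ) (hU : HarmonicOnSet U (ball 0 1))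
    (hVc : ContinuousOn V (ball 0 1))
    (hUV : ∀ x ∈ ball (0 : En 2) 1, 0 ≤ U x * V x)
    (x₀ : En 2) (hx₀ : x₀ ∈ ball 0 1) (hU0 : U x₀ = 0) (hV0 : V x₀ ≠ 0) :
    ∀ x ∈ ball (0 : En 2) 1, U x = 0 := by
  obtain ⟨hW2, hlapW⟩ := harmonic_transfer U hU
  set z₀ : ℂ := eIso.symm x₀ with hz₀def
  have hez₀ : eIso z₀ = x₀ := eIso.apply_symm_apply x₀
  have hz₀ : z₀ ∈ ball (0:ℂ) 1 := by rw [← eIso_mem_ball, hez₀]; exact hx₀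
  have hVat : ContinuousAt V x₀ := hVc.continuousAt (isOpen_ball.mem_nhds hx₀)
  have hball_ev : ∀ᶠ y in 𝓝 x₀, y ∈ ball (0 : En 2) 1 :=
    isOpen_ball.mem_nhds hx₀
  have hmemball : ∀ {δ : ℝ} {z : ℂ}, z ∈ ball z₀ δ → dist (eIso z) x₀ < δ := by
    intro δ z hzδ
    rw [← hez₀, eIso.dist_map]
    exact mem_ball.mp hzδ
  rcases hV0.lt_or_gt with hneg | hpos
  · -- V x₀ < 0 : U ≤ 0 near x₀
    have hevV : ∀ᶠ y in 𝓝 x₀, V y < 0 := hVat.eventually_lt_const hneg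
    obtain ⟨δ, hδpos, hδ⟩ := Metric.eventually_nhds_iff.mp (hball_ev.and hevV)
    have hsub : ball z₀ δ ⊆ ball (0:ℂ) 1 := by
      intro z hzδ
      exact eIso_mem_ball.mp (hδ (hmemball hzδ)).1
    have hnn : ∀ z ∈ ball z₀ δ, 0 ≤ -((U ∘ eIso) z) := by
      intro z hzδ
      obtain ⟨hmem, hVneg⟩ := hδ (hmemball hzδ)
      have := hUV (eIso z) hmem
      simp only [Function.comp_apply, neg_nonneg]
      nlinarith
    have hkey := key (fun y => -((U ∘ eIso) y)) hW2.neg (neg_lap _ hlapW) z₀ δ hδpos hsub hnn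
      (by simp [hez₀, hU0])
    intro x hx
    have hx' : eIso.symm x ∈ ball (0:ℂ) 1 := by
      rw [← eIso_mem_ball, eIso.apply_symm_apply]; exact hx
    have := hkey _ hx'
    simp only [Function.comp_apply, eIso.apply_symm_apply, neg_eq_zero] at this
    exact this
  · -- V x₀ > 0 : U ≥ 0 near x₀
    have hevV : ∀ᶠ y in 𝓝 x₀, 0 < V y := hVat.eventually_const_lt hpos
    obtain ⟨δ, hδpos, hδ⟩ := Metric.eventually_nhds_iff.mp (hball_ev.and hevV)
    have hsub : ball z₀ δ ⊆ ball (0:ℂ) 1 := by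
      intro z hzδ
      exact eIso_mem_ball.mp (hδ (hmemball hzδ)).1
    have hnn : ∀ z ∈ ball z₀ δ, 0 ≤ (U ∘ eIso) z := by
      intro z hzδ
      obtain ⟨hmem, hVpos⟩ := hδ (hmemball hzδ)
      have := hUV (eIso z) hmem
      simp only [Function.comp_apply]
      nlinarith
    have hkey := key (U ∘ eIso) hW2 hlapW z₀ δ hδpos hsub hnn
      (by simp [hez₀, hU0])
    intro x hx
    have hx' : eIso.symm x ∈ ball (0:ℂ) 1 := by
      rw [← eIso_mem_ball, eIso.apply_symm_apply]; exact hx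
    have := hkey _ hx'
    simpa only [Function.comp_apply, eIso.apply_symm_apply] using this


theorem stmt5 (u v : ℕ → En 2 → ℝ) (U V : En 2 → ℝ)
    (hu : ∀ m, HarmonicOnSet (u m) (ball 0 1))
    (hv : ∀ m, HarmonicOnSet (v m) (ball 0 1))
    (hz : ∀ m, zeroSet (u m) (ball 0 1) = zeroSet (v m) (ball 0 1))
    (hpos : ∀ m, ∀ x ∈ ball (0 : En 2) 1 \ zeroSet (u m) (ball 0 1), 0 < u m x * v m x)
    (hU : HarmonicOnSet U (ball 0 1)) (hV : HarmonicOnSet V (ball 0 1))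
    (hUne : ∃ x ∈ ball (0 : En 2) 1, U x ≠ 0)
    (hVne : ∃ x ∈ ball (0 : En 2) 1, V x ≠ 0)
    (hconvU : ∀ K : Set (En 2), K ⊆ ball (0 : En 2) 1 → IsCompact K →
      TendstoUniformlyOn (fun m x => u m x) U atTop K)
    (hconvV : ∀ K : Set (En 2), K ⊆ ball (0 : En 2) 1 → IsCompact K →
      TendstoUniformlyOn (fun m x => v m x) V atTop K) :
    zeroSet U (ball 0 1) = zeroSet V (ball 0 1) := by
  -- limit inequality
  have hUV : ∀ x ∈ ball (0 : En 2) 1, 0 ≤ U x * V x := by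
    intro x hx
    have hxK : ({x} : Set (En 2)) ⊆ ball (0 : En 2) 1 := by
      simpa using hx
    have htU : Tendsto (fun m => u m x) atTop (𝓝 (U x)) :=
      (hconvU {x} hxK isCompact_singleton).tendsto_at rfl
    have htV : Tendsto (fun m => v m x) atTop (𝓝 (V x)) :=
      (hconvV {x} hxK isCompact_singleton).tendsto_at rfl
    have hterm : ∀ m, 0 ≤ u m x * v m x := by
      intro m
      by_cases h0 : u m x = 0
      · rw [h0, zero_mul]
      · exact le_of_lt (hpos m x ⟨hx, fun hc => h0 hc.2⟩)
    exact ge_of_tendsto (htU.mul htV) (Eventually.of_forall hterm)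
  have hUVc : ∀ x ∈ ball (0 : En 2) 1, 0 ≤ V x * U x := by
    intro x hx
    rw [mul_comm]
    exact hUV x hx
  ext x
  simp only [zeroSet, Set.mem_setOf_eq]
  constructor
  · rintro ⟨hx, hUx⟩
    refine ⟨hx, ?_⟩
    by_contra hVx
    obtain ⟨y, hy, hUy⟩ := hUne
    exact hUy (main_aux U V hU (hV.1.continuousOn) hUV x hx hUx hVx y hy)
  · rintro ⟨hx, hVx⟩
    refine ⟨hx, ?_⟩
    by_contra hUx
    obtain ⟨y, hy, hVy⟩ := hVne
    exact hVy (main_aux V U hV (hU.1.continuousOn) hUVc x hx hVx hUx y hy)
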